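/- Let T be a regular interval exchange transformation over the ordered alphabet A with permutation π. Then for every u ∈ L(T), every return word w to u in L(T) is π-clustering for A. -/

import Mathlib

/-- `wordPow u p` is the `p`-fold concatenation `u^p`. -/
def wordPow {A : Type*} (u : List A) : ℕ → List A
  | 0 => []
  | n + 1 => u ++ wordPow u n

/-- A word is primitive if it is not a proper integer power of another word. -/
def Primitive {A : Type*} (w : List A) : Prop :=
  ∀ (v : List A) (m : ℕ), w = wordPow v m → m = 1

/-- The Burrows–Wheeler transform of a word: the last letters of its cyclic rotations
listed in non-decreasing lexicographic order. -/
def bwt {A : Type*} [LinearOrder A] (w : List A) : List A :=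
  (Multiset.sort
    (((List.range w.length).map (fun i => w.rotate i) : List (List A)) : Multiset (List A)) (· ≤ ·)).filterMap
    List.getLast?

/-- `w` is `π`-clustering: its BWT is `π(a₁)^{k₁} ⋯ π(a_k)^{k_k}` where `a₁ < … < a_k`
enumerates the alphabet and `k_i` is the number of occurrences of `π(a_i)` in `w`. -/
def Clustering {A : Type*} [LinearOrder A] [Fintype A] (π : Equiv.Perm A) (w : List A) : Prop :=
  bwt w =
    ((Finset.univ.sort (· ≤ ·)).map (fun a => List.replicate (w.count (π a)) (π a))).flatten

/-- An interval exchange transformation on `[l, l + Σ len a)` over the ordered alphabet `A`,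
with subinterval lengths `len` and permutation `perm`. -/
structure IET (A : Type*) [Fintype A] [LinearOrder A] where
  l : ℝ
  len : A → ℝ
  len_pos : ∀ a, 0 < len a
  perm : Equiv.Perm A

namespace IET

variable {A : Type*} [Fintype A] [LinearOrder A] (T : IET A)

/-- Right endpoint of the domain interval. -/
def right : ℝ := T.l + ∑ a, T.len a

/-- The domain `[ℓ, r)` of the IET. -/
def domain : Set ℝ := Set.Ico T.l T.right

/-- Left endpoint of the subinterval indexed by `a`. -/
def leftEnd (a : A) : ℝ := T.l + ∑ b ∈ Finset.univ.filter (· < a), T.len b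

/-- The subinterval `I_a`. -/
def seg (a : A) : Set ℝ := Set.Ico (T.leftEnd a) (T.leftEnd a + T.len a)

/-- Translation amount on `I_a`. -/
def τ (a : A) : ℝ :=
  (∑ b ∈ Finset.univ.filter (fun b => T.perm.symm b < T.perm.symm a), T.len b)
    - (∑ b ∈ Finset.univ.filter (· < a), T.len b)

open scoped Classical in
/-- The interval exchange transformation as a map `ℝ → ℝ` (identity off the domain). -/
noncomputable def map (x : ℝ) : ℝ :=
  if h : ∃ a, x ∈ T.seg a then x + T.τ h.choose else x

/-- The inverse transformation. -/
noncomputable def inv : ℝ → ℝ := Function.invFun T.map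

open scoped Classical in
/-- The letter of the subinterval containing `x`. -/
noncomputable def idx [Nonempty A] (x : ℝ) : A :=
  if h : ∃ a, x ∈ T.seg a then h.choose else Classical.arbitrary A

/-- The trajectory (natural coding) `Ω_T(x)` of `x`. -/
noncomputable def traj [Nonempty A] (x : ℝ) (n : ℕ) : A := T.idx (T.map^[n] x)

/-- The language of the IET: all finite factors of all trajectories. -/
def lang [Nonempty A] : Set (List A) :=
  { v | ∃ x ∈ T.domain, ∃ i : ℕ, v = (List.range v.length).map (fun j => T.traj x (i + j)) }

/-- The cylinder `I_w` of a word `w`. -/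
def cyl (w : List A) : Set ℝ :=
  { x | ∀ i : Fin w.length, T.map^[(i : ℕ)] x ∈ T.seg (w.get i) }

/-- Formal discontinuities of `T`. -/
def D : Set ℝ := { y | (∃ a, y = T.leftEnd a) ∧ y ≠ T.l }

/-- Formal discontinuities of the inverse of `T`. -/
def Dinv : Set ℝ :=
  { y | (∃ a, y = T.l + ∑ b ∈ Finset.univ.filter (fun b => T.perm.symm b < T.perm.symm a), T.len b)
      ∧ y ≠ T.l }

/-- `T^i` for an integer `i`. -/
noncomputable def iterZ (i : ℤ) (z : ℝ) : ℝ :=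
  if 0 ≤ i then T.map^[i.toNat] z else T.inv^[(-i).toNat] z

/-- Forward return time `ρ⁺_{J,T}(z)` of `z` to the open interval `(u, v)`. -/
noncomputable def rhoPlus (u v z : ℝ) : ℕ := sInf {n : ℕ | 0 < n ∧ T.map^[n] z ∈ Set.Ioo u v}

/-- Backward return time `ρ⁻_{J,T}(z)` of `z` to the open interval `(u, v)`. -/
noncomputable def rhoMinus (u v z : ℝ) : ℕ := sInf {n : ℕ | T.inv^[n] z ∈ Set.Ioo u v}

/-- The set `N_{J,T}(z)` for `J = [u, v)`. -/
noncomputable def Nset (u v z : ℝ) : Set ℝ :=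
  { y | ∃ i : ℤ, -(T.rhoMinus u v z : ℤ) ≤ i ∧ i ≤ (T.rhoPlus u v z : ℤ) - 1 ∧ y = T.iterZ i z }

/-- The set `Div(J, T)` for `J = [u, v)`. -/
noncomputable def Div (u v : ℝ) : Set ℝ := ⋃ γ ∈ T.D, T.Nset u v γ

/-- The interval `[u, v)` is admissible for `T`. -/
noncomputable def Admissible (u v : ℝ) : Prop :=
  u ∈ T.Div u v ∪ {T.right} ∧ v ∈ T.Div u v ∪ {T.right}

/-- Keane's regularity condition: the forward orbits of the formal discontinuities are
infinite and pairwise disjoint. -/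
def Regular : Prop :=
  ∀ γ ∈ T.D, ∀ γ' ∈ T.D, ∀ m n : ℕ, T.map^[m] γ = T.map^[n] γ' → γ = γ' ∧ m = n

end IET

open scoped Classical in
/-- First return time of `x` to `J` under `f` (junk value `0` if it never returns). -/
noncomputable def returnTime (f : ℝ → ℝ) (J : Set ℝ) (x : ℝ) : ℕ :=
  if h : ∃ n, 0 < n ∧ f^[n] x ∈ J then Nat.find h else 0

/-- First return map of `f` to `J`. -/
noncomputable def firstReturn (f : ℝ → ℝ) (J : Set ℝ) (x : ℝ) : ℝ :=
  f^[returnTime f J x] x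

/-- A finite word is a prefix of an infinite word (a sequence). -/
def SeqPrefix {α : Type*} (l : List α) (f : ℕ → α) : Prop :=
  ∀ i : Fin l.length, l.get i = f i

/-- `w` is a (left) return word to `u` in the language `L`: `wu ∈ L`, `u` is a prefix and a
suffix of `wu`, and `u` occurs exactly twice as a factor of `wu`. -/
def IsReturnWord {A : Type*} [DecidableEq A] (L : Set (List A)) (u w : List A) : Prop :=
  (w ++ u) ∈ L ∧ u <+: (w ++ u) ∧ u <:+ (w ++ u) ∧
    ((List.range ((w ++ u).length + 1)).countP
      (fun i => decide (u <+: (w ++ u).drop i))) = 2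


section Helpers

open List

/-- First-difference decomposition of a strict lexicographic comparison
of equal-length lists. -/
lemma lex_firstdiff {A : Type*} [LinearOrder A] (d : A) :
    ∀ {l₁ l₂ : List A}, List.Lex (· < ·) l₁ l₂ → l₁.length = l₂.length →
      ∃ t, t < l₁.length ∧ (∀ s, s < t → l₁.getD s d = l₂.getD s d) ∧
        l₁.getD t d < l₂.getD t d := by
  intro l₁ l₂ h
  induction h with
  | nil => intro h; simp at h
  | @rel a l₁ b l₂ hab =>
      intro _
      exact ⟨0, by simp, by omega, by simpa using hab⟩
  | @cons a l₁ l₂ h ih =>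
      intro hlen
      obtain ⟨t, ht, hagr, hlt⟩ := ih (by simpa using hlen)
      refine ⟨t + 1, by simpa using ht, ?_, by simpa using hlt⟩
      intro s hs
      cases s with
      | zero => simp
      | succ s => simpa using hagr s (by omega)

namespace IET

variable {A : Type*} [Fintype A] [LinearOrder A] [Nonempty A] (T : IET A)

lemma len_nonneg (a : A) : 0 ≤ T.len a := (T.len_pos a).le

lemma leftEnd_add_le {a b : A} (hab : a < b) : T.leftEnd a + T.len a ≤ T.leftEnd b := by
  unfold leftEnd
  have h1 : (∑ c ∈ Finset.univ.filter (· < a), T.len c) + T.len a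
      = ∑ c ∈ insert a (Finset.univ.filter (· < a)), T.len c := by
    rw [Finset.sum_insert (by simp)]; ring
  have h2 : insert a (Finset.univ.filter (· < a)) ⊆ Finset.univ.filter (· < b) := by
    intro c hc
    rcases Finset.mem_insert.1 hc with rfl | hc
    · simp [hab]
    · simp only [Finset.mem_filter, Finset.mem_univ, true_and] at hc ⊢
      exact hc.trans hab
  have h3 := Finset.sum_le_sum_of_subset_of_nonneg h2 (fun c _ _ => T.len_nonneg c)
  linarith

lemma seg_disjoint {a b : A} (hab : a ≠ b) {z : ℝ} (ha : z ∈ T.seg a) (hb : z ∈ T.seg b) :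
    False := by
  rcases hab.lt_or_gt with h | h
  · have := T.leftEnd_add_le h
    have h1 := ha.2; have h2 := hb.1
    linarith
  · have := T.leftEnd_add_le h
    have h1 := hb.2; have h2 := ha.1
    linarith

lemma seg_order {a b : A} (hab : a < b) {z z' : ℝ} (ha : z ∈ T.seg a) (hb : z' ∈ T.seg b) :
    z < z' := by
  have := T.leftEnd_add_le hab
  have h1 := ha.2; have h2 := hb.1
  linarith

lemma exists_seg {z : ℝ} (hz : z ∈ T.domain) : ∃ a, z ∈ T.seg a := by
  classical
  obtain ⟨hz1, hz2⟩ := hz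
  set F := Finset.univ.filter (fun a : A => T.leftEnd a ≤ z) with hF
  have hne : F.Nonempty := by
    obtain ⟨a0, -, ha0⟩ := Finset.exists_min_image Finset.univ (id : A → A)
      ⟨Classical.arbitrary A, Finset.mem_univ _⟩
    refine ⟨a0, ?_⟩
    have hfe : Finset.univ.filter (· < a0) = (∅ : Finset A) := by
      apply Finset.filter_eq_empty_iff.2
      intro b _
      exact not_lt.2 (ha0 b (Finset.mem_univ b))
    have : T.leftEnd a0 = T.l := by
      unfold leftEnd; rw [hfe]; simp
    simp only [hF, Finset.mem_filter, Finset.mem_univ, true_and]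
    rw [this]; exact hz1
  set a := F.max' hne with ha
  have haF : T.leftEnd a ≤ z := by
    have := F.max'_mem hne
    simpa [hF] using this
  refine ⟨a, haF, ?_⟩
  by_contra hcon
  push_neg at hcon
  by_cases htop : ∀ b, b ≤ a
  · have hins : insert a (Finset.univ.filter (· < a)) = Finset.univ := by
      apply Finset.eq_univ_of_forall
      intro b
      rcases lt_or_eq_of_le (htop b) with h | h
      · exact Finset.mem_insert_of_mem (by simp [h])
      · simp [h]
    have : T.leftEnd a + T.len a = T.right := by
      unfold leftEnd right
      have := Finset.sum_insert (s := Finset.univ.filter (· < a)) (a := a)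
        (f := T.len) (by simp)
      rw [hins] at this
      linarith
    rw [this] at hcon
    exact absurd hz2 (not_lt.2 hcon)
  · push_neg at htop
    obtain ⟨b, hb⟩ := htop
    have hGne : (Finset.univ.filter (fun c : A => a < c)).Nonempty :=
      ⟨b, Finset.mem_filter.2 ⟨Finset.mem_univ b, hb⟩⟩
    obtain ⟨a', ha'mem, ha'min⟩ :=
      Finset.exists_min_image (Finset.univ.filter (fun c : A => a < c)) id hGne
    have haa' : a < a' := (Finset.mem_filter.1 ha'mem).2
    have hfeq : Finset.univ.filter (· < a') = insert a (Finset.univ.filter (· < a)) := by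
      ext c
      simp only [Finset.mem_filter, Finset.mem_univ, true_and, Finset.mem_insert]
      constructor
      · intro hc
        rcases lt_trichotomy c a with h | h | h
        · exact Or.inr h
        · exact Or.inl h
        · exfalso
          have : a' ≤ c := ha'min c (Finset.mem_filter.2 ⟨Finset.mem_univ c, h⟩)
          exact absurd hc (not_lt.2 this)
      · rintro (rfl | hc)
        · exact haa'
        · exact hc.trans haa'
    have hEq : T.leftEnd a' = T.leftEnd a + T.len a := by
      unfold leftEnd
      rw [hfeq, Finset.sum_insert (by simp)]
      ring
    have hmemF : a' ∈ F := by
      simp only [hF, Finset.mem_filter, Finset.mem_univ, true_and]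
      rw [hEq]; exact hcon
    have := F.le_max' a' hmemF
    rw [← ha] at this
    exact absurd haa' (not_lt.2 this)

lemma idx_eq {z : ℝ} {a : A} (hz : z ∈ T.seg a) : T.idx z = a := by
  have hex : ∃ b, z ∈ T.seg b := ⟨a, hz⟩
  rw [IET.idx, dif_pos hex]
  by_contra hne
  exact T.seg_disjoint hne hex.choose_spec hz

lemma map_eq {z : ℝ} {a : A} (hz : z ∈ T.seg a) : T.map z = z + T.τ a := by
  have hex : ∃ b, z ∈ T.seg b := ⟨a, hz⟩
  have hc : hex.choose = a := by
    by_contra hne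
    exact T.seg_disjoint hne hex.choose_spec hz
  rw [IET.map, dif_pos hex, hc]

lemma map_mem_Ico {z : ℝ} {a : A} (hz : z ∈ T.seg a) :
    T.map z ∈ Set.Ico
      (T.l + ∑ b ∈ Finset.univ.filter (fun b => T.perm.symm b < T.perm.symm a), T.len b)
      ((T.l + ∑ b ∈ Finset.univ.filter (fun b => T.perm.symm b < T.perm.symm a), T.len b)
        + T.len a) := by
  rw [T.map_eq hz]
  obtain ⟨h1, h2⟩ := hz
  unfold leftEnd at h1 h2
  unfold τ
  constructor
  · linarith
  · linarith

lemma sum_symm_lt_add_le (a : A) :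
    (∑ b ∈ Finset.univ.filter (fun b => T.perm.symm b < T.perm.symm a), T.len b) + T.len a
      ≤ ∑ b, T.len b := by
  have h1 : (∑ b ∈ Finset.univ.filter (fun b => T.perm.symm b < T.perm.symm a), T.len b)
      + T.len a
      = ∑ b ∈ insert a (Finset.univ.filter (fun b => T.perm.symm b < T.perm.symm a)),
          T.len b := by
    rw [Finset.sum_insert (by simp)]; ring
  rw [h1]
  exact Finset.sum_le_sum_of_subset_of_nonneg (Finset.subset_univ _)
    (fun c _ _ => T.len_nonneg c)

lemma map_mem_domain {z : ℝ} {a : A} (hz : z ∈ T.seg a) : T.map z ∈ T.domain := by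
  obtain ⟨h1, h2⟩ := T.map_mem_Ico hz
  constructor
  · have : (0:ℝ) ≤ ∑ b ∈ Finset.univ.filter (fun b => T.perm.symm b < T.perm.symm a),
        T.len b := Finset.sum_nonneg (fun c _ => T.len_nonneg c)
    linarith
  · have := T.sum_symm_lt_add_le a
    unfold right
    linarith

lemma iter_mem_domain {z : ℝ} (hz : z ∈ T.domain) (k : ℕ) : T.map^[k] z ∈ T.domain := by
  induction k with
  | zero => simpa using hz
  | succ k ih =>
      rw [Function.iterate_succ_apply']
      obtain ⟨a, ha⟩ := T.exists_seg ih
      exact T.map_mem_domain ha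

lemma image_order {z z' : ℝ} {a b : A} (hz : z ∈ T.seg a) (hz' : z' ∈ T.seg b)
    (h : T.map z < T.map z') : T.perm.symm a ≤ T.perm.symm b := by
  by_contra hc
  push_neg at hc
  obtain ⟨h1, h2⟩ := T.map_mem_Ico hz
  obtain ⟨h3, h4⟩ := T.map_mem_Ico hz'
  have key : (∑ c ∈ Finset.univ.filter (fun c => T.perm.symm c < T.perm.symm b), T.len c)
      + T.len b
      ≤ ∑ c ∈ Finset.univ.filter (fun c => T.perm.symm c < T.perm.symm a), T.len c := by
    have e1 : (∑ c ∈ Finset.univ.filter (fun c => T.perm.symm c < T.perm.symm b), T.len c)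
        + T.len b
        = ∑ c ∈ insert b (Finset.univ.filter (fun c => T.perm.symm c < T.perm.symm b)),
            T.len c := by
      rw [Finset.sum_insert (by simp)]; ring
    rw [e1]
    apply Finset.sum_le_sum_of_subset_of_nonneg ?_ (fun c _ _ => T.len_nonneg c)
    intro c hcmem
    rcases Finset.mem_insert.1 hcmem with rfl | hcmem
    · simp [hc]
    · simp only [Finset.mem_filter, Finset.mem_univ, true_and] at hcmem ⊢
      exact hcmem.trans hc
  linarith

/-- Trajectory comparison implies order of points. -/
lemma orbit_lt : ∀ (t : ℕ) (z z' : ℝ), z ∈ T.domain → z' ∈ T.domain →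
    (∀ s, s < t → T.idx (T.map^[s] z) = T.idx (T.map^[s] z')) →
    T.idx (T.map^[t] z) < T.idx (T.map^[t] z') → z < z' := by
  intro t
  induction t with
  | zero =>
      intro z z' hz hz' _ hlt
      obtain ⟨a, ha⟩ := T.exists_seg hz
      obtain ⟨b, hb⟩ := T.exists_seg hz'
      simp only [Function.iterate_zero_apply] at hlt
      rw [T.idx_eq ha, T.idx_eq hb] at hlt
      exact T.seg_order hlt ha hb
  | succ t ih =>
      intro z z' hz hz' hagree hlt
      obtain ⟨a, ha⟩ := T.exists_seg hz
      obtain ⟨b, hb⟩ := T.exists_seg hz'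
      have h0 := hagree 0 (by omega)
      simp only [Function.iterate_zero_apply] at h0
      rw [T.idx_eq ha, T.idx_eq hb] at h0
      subst h0
      have hstep : T.map z < T.map z' := by
        apply ih (T.map z) (T.map z') (T.map_mem_domain ha) (T.map_mem_domain hb)
        · intro s hs
          have := hagree (s + 1) (by omega)
          rwa [Function.iterate_succ_apply, Function.iterate_succ_apply] at this
        · rwa [Function.iterate_succ_apply, Function.iterate_succ_apply] at hlt
      rw [T.map_eq ha, T.map_eq hb] at hstep
      linarith

/-- Convexity: a point between two trajectory-synchronized points follows the
same coding. -/
lemma orbit_between : ∀ (t : ℕ) (z q z' : ℝ), z ∈ T.domain → q ∈ T.domain → z' ∈ T.domain →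
    z ≤ q → q ≤ z' →
    (∀ s, s < t → T.idx (T.map^[s] z) = T.idx (T.map^[s] z')) →
    ∀ s, s < t → T.idx (T.map^[s] q) = T.idx (T.map^[s] z) := by
  intro t
  induction t with
  | zero => intro _ _ _ _ _ _ _ _ _ s hs; omega
  | succ t ih =>
      intro z q z' hz hq hz' h1 h2 hagree s hs
      obtain ⟨a, ha⟩ := T.exists_seg hz
      obtain ⟨b, hb⟩ := T.exists_seg hz'
      have h0 := hagree 0 (by omega)
      simp only [Function.iterate_zero_apply] at h0
      rw [T.idx_eq ha, T.idx_eq hb] at h0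
      subst h0
      have hqa : q ∈ T.seg a := ⟨le_trans ha.1 h1, lt_of_le_of_lt h2 hb.2⟩
      cases s with
      | zero =>
          simp only [Function.iterate_zero_apply]
          rw [T.idx_eq hqa, T.idx_eq ha]
      | succ s =>
          have hres := ih (T.map z) (T.map q) (T.map z') (T.map_mem_domain ha)
            (T.map_mem_domain hqa) (T.map_mem_domain hb)
            (by rw [T.map_eq ha, T.map_eq hqa]; linarith)
            (by rw [T.map_eq hqa, T.map_eq hb]; linarith)
            (fun s' hs' => by
              have := hagree (s' + 1) (by omega)
              rwa [Function.iterate_succ_apply, Function.iterate_succ_apply] at this)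
            s (by omega)
          rwa [Function.iterate_succ_apply, Function.iterate_succ_apply]

end IET

end Helpers

/-- In the language of a regular IET with permutation `π`, every return word is
`π`-clustering. -/
theorem returnWord_clustering_of_regular {A : Type*} [Fintype A] [LinearOrder A] [Nonempty A]
    (T : IET A) (hreg : T.Regular) :
    ∀ u ∈ T.lang, ∀ w : List A, IsReturnWord T.lang u w → Clustering T.perm w := by
  classical
  intro u hu w hw
  obtain ⟨hlang, hpre, hsuf, hcount⟩ := hw
  have a₀ : A := Classical.arbitrary A
  set n := w.length with hn
  set m := u.length with hm
  have hlen' : (w ++ u).length = n + m := by simp [hn, hm]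
  -- `w` is nonempty
  have hn1 : 1 ≤ n := by
    rcases Nat.eq_zero_or_pos n with h0 | h
    swap
    · exact h
    exfalso
    have hw0 : w = [] := List.length_eq_zero_iff.mp (by omega)
    subst hw0
    simp only [List.nil_append] at hcount
    rcases Nat.eq_zero_or_pos u.length with hm0 | hm0
    · have hu0 : u = [] := List.length_eq_zero_iff.mp hm0
      subst hu0
      simp [List.countP_cons] at hcount
    · rw [List.countP_eq_length_filter] at hcount
      have hnd : ((List.range (u.length + 1)).filter
          (fun i => decide (u <+: u.drop i))).Nodup :=
        List.nodup_range.filter _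
      have hall : ∀ i ∈ (List.range (u.length + 1)).filter
          (fun i => decide (u <+: u.drop i)), i = 0 := by
        intro i hiL
        rw [List.mem_filter] at hiL
        obtain ⟨hir, hdec⟩ := hiL
        have hpref : u <+: u.drop i := of_decide_eq_true hdec
        have hlen2 := hpref.length_le
        rw [List.length_drop] at hlen2
        have := List.mem_range.1 hir
        omega
      obtain ⟨p, q, hpq⟩ := List.length_eq_two.mp hcount
      rw [hpq] at hnd hall
      have hp := hall p (by simp)
      have hq := hall q (by simp)
      subst hp; subst hq
      simp at hnd
  -- occurrence positions of `u` in `wu` are exactly 0 and n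
  have hnoPre : ∀ p, 0 < p → p < n → ¬ (u <+: (w ++ u).drop p) := by
    intro p hp0 hpn hpref
    rw [List.countP_eq_length_filter] at hcount
    have hmem : ∀ i, i < n + m + 1 → (u <+: (w ++ u).drop i) →
        i ∈ (List.range ((w ++ u).length + 1)).filter
          (fun i => decide (u <+: (w ++ u).drop i)) := by
      intro i h1 h2
      rw [List.mem_filter]
      exact ⟨List.mem_range.2 (by omega), decide_eq_true h2⟩
    have h0L := hmem 0 (by omega) (by simpa using hpre)
    have hpL := hmem p (by omega) hpref
    have hnL := hmem n (by omega) (by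
      have : (w ++ u).drop n = u := by
        rw [hn]; exact List.drop_left
      rw [this])
    obtain ⟨x1, x2, hxy⟩ := List.length_eq_two.mp hcount
    rw [hxy] at h0L hpL hnL
    simp only [List.mem_cons, List.mem_singleton, List.not_mem_nil, or_false] at h0L hpL hnL
    omega
  -- the orbit point `y` whose trajectory starts with `wu`
  obtain ⟨x, hx, i₀, heq⟩ := hlang
  set y := T.map^[i₀] x with hy
  have hydom : ∀ j, T.map^[j] y ∈ T.domain := by
    intro j
    rw [hy, ← Function.iterate_add_apply]
    exact T.iter_mem_domain hx _
  have hIter : ∀ a b : ℕ, T.map^[a] (T.map^[b] y) = T.map^[a + b] y :=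
    fun a b => (Function.iterate_add_apply T.map a b y).symm
  set W : ℕ → A := fun q => (w ++ u).getD q a₀ with hWdef
  have hW : ∀ q, q < n + m → T.idx (T.map^[q] y) = W q := by
    intro q hq
    have hq' : q < (w ++ u).length := by omega
    have e1 : W q = T.traj x (i₀ + q) := by
      show (w ++ u).getD q a₀ = _
      conv_lhs => rw [heq]
      rw [List.getD_eq_getElem _ _ (by simpa using hq')]
      simp
    rw [e1]
    have e2 : T.map^[q] y = T.map^[i₀ + q] x := by
      rw [hy, Nat.add_comm, Function.iterate_add_apply]
    rw [e2]
    rfl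
  have hseg : ∀ q, q < n + m → T.map^[q] y ∈ T.seg (W q) := by
    intro q hq
    obtain ⟨b, hb⟩ := T.exists_seg (hydom q)
    have hbW : b = W q := (T.idx_eq hb).symm.trans (hW q hq)
    rw [← hbW]
    exact hb
  -- indexing facts
  have hpre' : ∀ r, r < m → u.getD r a₀ = W r := by
    obtain ⟨t, ht⟩ := hpre
    intro r hr
    show u.getD r a₀ = (w ++ u).getD r a₀
    have hrlen : r < (u ++ t).length := by rw [ht, hlen']; omega
    rw [← ht, List.getD_eq_getElem _ _ (show r < u.length by omega),
      List.getD_eq_getElem _ _ hrlen]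
    exact (List.getElem_append_left (by omega)).symm
  have hg1 : ∀ q, q < n → W q = w.getD q a₀ := by
    intro q hq
    show (w ++ u).getD q a₀ = w.getD q a₀
    rw [List.getD_eq_getElem _ _ (show q < w.length by omega),
      List.getD_eq_getElem _ _ (show q < (w ++ u).length by omega)]
    exact List.getElem_append_left (by omega)
  have hg2 : ∀ r, r < m → W (n + r) = u.getD r a₀ := by
    intro r hr
    show (w ++ u).getD (n + r) a₀ = u.getD r a₀
    rw [List.getD_eq_getElem _ _ (show r < u.length by omega),
      List.getD_eq_getElem _ _ (show n + r < (w ++ u).length by omega),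
      List.getElem_append_right (show w.length ≤ n + r by omega)]
    congr 1
    omega
  have hWw : ∀ q, q < n + m → W q = w.getD (q % n) a₀ := by
    intro q
    induction q using Nat.strong_induction_on with
    | _ q ih =>
      intro hq
      by_cases hqn : q < n
      · rw [Nat.mod_eq_of_lt hqn, hg1 q hqn]
      · push_neg at hqn
        have h2 : q - n < m := by omega
        have e1 : W q = u.getD (q - n) a₀ := by
          conv_lhs => rw [show q = n + (q - n) by omega]
          exact hg2 _ h2
        rw [Nat.mod_eq_sub_mod hqn, e1, hpre' _ h2]
        exact ih (q - n) (by omega) (by omega)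
  -- occurrence failure in getD form
  have hocc : ∀ p, 0 < p → p < n → ∃ r, r < m ∧ u.getD r a₀ ≠ W (p + r) := by
    intro p hp0 hpn
    by_contra hc
    push_neg at hc
    apply hnoPre p hp0 hpn
    rw [List.prefix_iff_eq_take]
    apply List.ext_getElem (by simp [hlen']; omega)
    intro r h1 h2
    have hrm : r < m := by omega
    rw [List.getElem_take, List.getElem_drop]
    have e2 := hc r hrm
    simp only [hWdef] at e2
    rw [List.getD_eq_getElem _ _ (show r < u.length by omega),
      List.getD_eq_getElem _ _ (show p + r < (w ++ u).length by omega)] at e2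
    exact e2
  -- rotations
  have hrot : ∀ (i s : ℕ), s < n → (w.rotate i).getD s a₀ = w.getD ((s + i) % n) a₀ := by
    intro i s hs
    have h1 : s < (w.rotate i).length := by rw [List.length_rotate]; omega
    rw [List.getD_eq_getElem _ _ h1, List.getElem_rotate,
      List.getD_eq_getElem _ _ (by rw [← hn]; exact Nat.mod_lt _ (by omega))]
  -- the dynamical key lemma
  have keyDyn : ∀ i j, i < n → j < n → i ≠ j →
      ∀ t, t < n → (∀ s, s < t → w.getD ((s + i) % n) a₀ = w.getD ((s + j) % n) a₀) →
      w.getD ((t + i) % n) a₀ < w.getD ((t + j) % n) a₀ →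
      T.perm.symm (w.getD ((n - 1 + i) % n) a₀) ≤ T.perm.symm (w.getD ((n - 1 + j) % n) a₀) := by
    intro i j hi hj hij t ht hagree hlt
    -- Step 1: the first difference occurs early enough
    have hstep1 : t + max i j < n + m := by
      by_contra hbig
      push_neg at hbig
      obtain ⟨r, hr, hne⟩ := hocc (n - (max i j - min i j)) (by omega) (by omega)
      have e1 : u.getD r a₀ = w.getD (r % n) a₀ := by
        rw [hpre' r hr, hWw r (by omega)]
      have e2 : W (n - (max i j - min i j) + r) =
          w.getD ((n - (max i j - min i j) + r) % n) a₀ := hWw _ (by omega)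
      have hs := hagree (n - max i j + r) (by omega)
      have hsym : w.getD ((n - max i j + r + min i j) % n) a₀
          = w.getD ((n - max i j + r + max i j) % n) a₀ := by
        rcases le_total i j with hle | hle
        · rw [max_eq_right hle, min_eq_left hle]
          rw [max_eq_right hle] at hs
          exact hs
        · rw [max_eq_left hle, min_eq_right hle]
          rw [max_eq_left hle] at hs
          exact hs.symm
      rw [show n - max i j + r + min i j = n - (max i j - min i j) + r by omega,
        show n - max i j + r + max i j = n + r by omega] at hsym
      apply hne
      rw [e1, e2, hsym, Nat.add_mod_left]
    -- Step 2: order of the orbit points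
    have hFlt : T.map^[i] y < T.map^[j] y := by
      apply T.orbit_lt t _ _ (hydom i) (hydom j)
      · intro s hs
        rw [hIter s i, hIter s j,
          hW (s + i) (by omega), hW (s + j) (by omega),
          hWw (s + i) (by omega), hWw (s + j) (by omega)]
        exact hagree s hs
      · rw [hIter t i, hIter t j,
          hW (t + i) (by omega), hW (t + j) (by omega),
          hWw (t + i) (by omega), hWw (t + j) (by omega)]
        exact hlt
    -- helpers for last-letter comparison
    have hsegPre : ∀ k, k < n → T.map^[k] y ∈ T.seg (w.getD k a₀) := by
      intro k hk
      have := hseg k (by omega)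
      rwa [hWw k (by omega), Nat.mod_eq_of_lt hk] at this
    have hmap : ∀ k, 0 < k → T.map^[k] y = T.map (T.map^[k - 1] y) := by
      intro k hk
      conv_lhs => rw [show k = (k - 1) + 1 by omega]
      rw [Function.iterate_succ_apply']
    have hidx : ∀ k, 0 < k → k < n → (n - 1 + k) % n = k - 1 := by
      intro k h1 h2
      rw [show n - 1 + k = n + (k - 1) by omega, Nat.add_mod_left]
      exact Nat.mod_eq_of_lt (by omega)
    have hidx0 : (n - 1 + 0) % n = n - 1 := by
      rw [Nat.add_zero]
      exact Nat.mod_eq_of_lt (by omega)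
    -- Step 3: case analysis
    rcases Nat.eq_zero_or_pos i with hi0 | hip
    · -- i = 0
      subst hi0
      have hjp : 0 < j := by omega
      have hFn : T.map^[n] y < T.map^[j] y := by
        rcases lt_or_ge (T.map^[n] y) (T.map^[j] y) with h | hcon
        · exact h
        exfalso
        have hagg : ∀ s, s < m → T.idx (T.map^[s] y) = T.idx (T.map^[s] (T.map^[n] y)) := by
          intro s hs
          rw [hIter s n, hW (s + n) (by omega), hW s (by omega),
            show s + n = n + s by omega, hg2 s hs, ← hpre' s hs]
        have hbet := T.orbit_between m y (T.map^[j] y) (T.map^[n] y)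
          (by simpa using hydom 0) (hydom j) (hydom n)
          (le_of_lt (by simpa using hFlt)) hcon hagg
        obtain ⟨r, hr, hne⟩ := hocc j hjp hj
        apply hne
        rw [hpre' r hr, ← hW r (by omega), ← hW (j + r) (by omega)]
        have h1 := hbet r (by omega)
        rw [hIter r j] at h1
        rw [show j + r = r + j by omega]
        exact h1.symm
      have himg : T.perm.symm (w.getD (n - 1) a₀) ≤ T.perm.symm (w.getD (j - 1) a₀) := by
        apply T.image_order (hsegPre (n - 1) (by omega)) (hsegPre (j - 1) (by omega))
        rw [← hmap n (by omega), ← hmap j hjp]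
        exact hFn
      rw [hidx0, hidx j hjp hj]
      exact himg
    · rcases Nat.eq_zero_or_pos j with hj0 | hjp
      · -- j = 0
        subst hj0
        have hFn : T.map^[i] y < T.map^[n] y := by
          rcases lt_or_ge (T.map^[i] y) (T.map^[n] y) with h | hcon
          · exact h
          exfalso
          have hagg : ∀ s, s < m → T.idx (T.map^[s] (T.map^[n] y)) = T.idx (T.map^[s] y) := by
            intro s hs
            rw [hIter s n, hW (s + n) (by omega), hW s (by omega),
              show s + n = n + s by omega, hg2 s hs, ← hpre' s hs]
          have hbet := T.orbit_between m (T.map^[n] y) (T.map^[i] y) y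
            (hydom n) (hydom i) (by simpa using hydom 0)
            hcon (le_of_lt (by simpa using hFlt)) hagg
          obtain ⟨r, hr, hne⟩ := hocc i hip hi
          apply hne
          rw [hpre' r hr, ← hW r (by omega), ← hW (i + r) (by omega)]
          have h1 := hbet r (by omega)
          have h2 := hagg r hr
          have h3 := h1.trans h2
          rw [hIter r i] at h3
          rw [show i + r = r + i by omega]
          exact h3.symm
        have himg : T.perm.symm (w.getD (i - 1) a₀) ≤ T.perm.symm (w.getD (n - 1) a₀) := by
          apply T.image_order (hsegPre (i - 1) (by omega)) (hsegPre (n - 1) (by omega))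
          rw [← hmap i hip, ← hmap n (by omega)]
          exact hFn
        rw [hidx0, hidx i hip hi]
        exact himg
      · -- both positive
        have himg : T.perm.symm (w.getD (i - 1) a₀) ≤ T.perm.symm (w.getD (j - 1) a₀) := by
          apply T.image_order (hsegPre (i - 1) (by omega)) (hsegPre (j - 1) (by omega))
          rw [← hmap i hip, ← hmap j hjp]
          exact hFlt
        rw [hidx i hip hi, hidx j hjp hj]
        exact himg
  -- BWT bookkeeping
  show bwt w = ((Finset.univ.sort (· ≤ ·)).map
    (fun a => List.replicate (w.count (T.perm a)) (T.perm a))).flatten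
  set M0 : List (List A) := (List.range w.length).map (fun i => w.rotate i) with hM0
  set S : List (List A) := Multiset.sort (↑M0 : Multiset (List A)) (· ≤ ·) with hS
  set g : List A → A := fun v => v.getLastD a₀ with hg
  have hSmem : ∀ v ∈ S, ∃ i, i < n ∧ v = w.rotate i := by
    intro v hv
    rw [hS, Multiset.mem_sort, Multiset.mem_coe, hM0, List.mem_map] at hv
    obtain ⟨i, hi, rfl⟩ := hv
    exact ⟨i, by rw [hn]; exact List.mem_range.1 hi, rfl⟩
  have hSperm : List.Perm S M0 := Multiset.coe_eq_coe.mp (Multiset.sort_eq _ _)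
  have hfm : ∀ (L : List (List A)), (∀ v ∈ L, v ≠ []) →
      L.filterMap List.getLast? = L.map g := by
    intro L
    induction L with
    | nil => intro _; simp
    | cons v L ih =>
        intro h
        have hv := h v List.mem_cons_self
        rw [List.filterMap_cons, List.map_cons, List.getLast?_eq_getLast hv,
          ih (fun v' hv' => h v' (List.mem_cons_of_mem _ hv'))]
        have : g v = v.getLast hv := by
          rw [hg]
          simp only []
          rw [List.getLastD_eq_getLast?, List.getLast?_eq_getLast hv, Option.getD_some]
        rw [this]
  have hbwt : bwt w = S.map g := by
    have hSne : ∀ v ∈ S, v ≠ [] := by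
      intro v hv
      obtain ⟨i, hi, rfl⟩ := hSmem v hv
      intro hnil
      have := congrArg List.length hnil
      rw [List.length_rotate] at this
      simp only [List.length_nil] at this
      omega
    rw [show bwt w = S.filterMap List.getLast? from rfl]
    exact hfm S hSne
  have hgetD : ∀ (l : List A), l.getLastD a₀ = l.getD (l.length - 1) a₀ := by
    intro l
    cases l with
    | nil => rfl
    | cons a l =>
        have hne : (a :: l) ≠ [] := List.cons_ne_nil a l
        rw [List.getLastD_eq_getLast?, List.getLast?_eq_getLast hne, Option.getD_some,
          List.getLast_eq_getElem, List.getD_eq_getElem _ _ (by simp)]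
  have hglast : ∀ i, i < n → g (w.rotate i) = w.getD ((n - 1 + i) % n) a₀ := by
    intro i hi
    rw [hg]
    simp only []
    rw [hgetD, List.length_rotate, ← hn, hrot i (n - 1) (by omega)]
  have hwself : (List.range n).map (fun q => w.getD q a₀) = w := by
    apply List.ext_getElem (by simp [hn])
    intro q h1 h2
    simp only [List.getElem_map, List.getElem_range]
    rw [List.getD_eq_getElem _ _ h2]
  have hsigma : (List.range n).map (fun i => (n - 1 + i) % n) = (List.range n).rotate (n - 1) := by
    apply List.ext_getElem (by simp)
    intro q h1 h2
    simp only [List.getElem_map, List.getElem_range, List.getElem_rotate, List.length_range]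
    congr 1
    omega
  have hpermA : List.Perm (S.map g) w := by
    have hA := hSperm.map g
    have h2 : M0.map g = (List.range n).map (fun i => w.getD ((n - 1 + i) % n) a₀) := by
      rw [hM0, List.map_map, ← hn]
      apply List.map_congr_left
      intro i hi
      exact hglast i (List.mem_range.1 hi)
    have h3 : (List.range n).map (fun i => w.getD ((n - 1 + i) % n) a₀)
        = ((List.range n).map (fun q => w.getD q a₀)).rotate (n - 1) := by
      rw [← List.map_rotate, ← hsigma, List.map_map]
      rfl
    rw [h2, h3] at hA
    have hB := List.rotate_perm ((List.range n).map (fun q => w.getD q a₀)) (n - 1)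
    have hC : List.Perm ((List.range n).map (fun q => w.getD q a₀)) w := by
      rw [hwself]
    exact hA.trans (hB.trans hC)
  set rel : A → A → Prop := fun c d => T.perm.symm c ≤ T.perm.symm d with hrel
  haveI hanti : Std.Antisymm rel :=
    ⟨fun a b h1 h2 => T.perm.symm.injective (le_antisymm h1 h2)⟩
  have hsort1 : List.Pairwise rel (S.map g) := by
    rw [List.pairwise_map]
    have hpair : List.Pairwise (· ≤ ·) S := Multiset.pairwise_sort _ _
    apply List.Pairwise.imp_of_mem ?_ hpair
    intro v₁ v₂ h1 h2 hle
    obtain ⟨i, hi, rfl⟩ := hSmem v₁ h1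
    obtain ⟨j, hj, rfl⟩ := hSmem v₂ h2
    rcases eq_or_lt_of_le hle with heqv | hlt
    · rw [heqv]
    · have hij : i ≠ j := by
        rintro rfl
        exact lt_irrefl _ hlt
      have hlex : List.Lex (· < ·) (w.rotate i) (w.rotate j) := hlt
      obtain ⟨t, ht, hagr, hltt⟩ := lex_firstdiff a₀ hlex
        (by rw [List.length_rotate, List.length_rotate])
      rw [List.length_rotate, ← hn] at ht
      rw [hglast i hi, hglast j hj]
      apply keyDyn i j hi hj hij t ht
      · intro s hs
        have hx1 := hagr s hs
        rwa [hrot i s (by omega), hrot j s (by omega)] at hx1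
      · have hx1 := hltt
        rwa [hrot i t (by omega), hrot j t (by omega)] at hx1
  have hsort2 : List.Pairwise rel (((Finset.univ.sort (· ≤ ·)).map
      (fun a => List.replicate (w.count (T.perm a)) (T.perm a))).flatten) := by
    rw [List.pairwise_flatten]
    constructor
    · intro l hl
      rw [List.mem_map] at hl
      obtain ⟨a, ha, rfl⟩ := hl
      rw [List.pairwise_replicate]
      exact Or.inr (le_refl _)
    · rw [List.pairwise_map]
      apply List.Pairwise.imp ?_ (Finset.pairwise_sort Finset.univ (· ≤ ·))
      intro a b hab x hx y hy
      rw [List.eq_of_mem_replicate hx, List.eq_of_mem_replicate hy]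
      show T.perm.symm (T.perm a) ≤ T.perm.symm (T.perm b)
      simpa using hab
  have hpermB : List.Perm w (((Finset.univ.sort (· ≤ ·)).map
      (fun a => List.replicate (w.count (T.perm a)) (T.perm a))).flatten) := by
    rw [List.perm_iff_count]
    intro c
    rw [List.count_flatten, List.map_map]
    have hstep : ∀ a ∈ Finset.univ.sort (· ≤ ·),
        (List.count c ∘ fun a => List.replicate (w.count (T.perm a)) (T.perm a)) a
        = if T.perm a = c then w.count c else 0 := by
      intro a _
      simp only [Function.comp_apply, List.count_replicate]
      by_cases h : T.perm a = c
      · simp [h]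
      · simp [h]
    rw [List.map_congr_left hstep]
    have hsum1 : ((Finset.univ.sort (· ≤ ·)).map
        (fun a => if T.perm a = c then w.count c else 0)).sum
        = ∑ a ∈ Finset.univ, (if T.perm a = c then w.count c else 0) := by
      rw [Finset.sum_eq_multiset_sum, ← Finset.sort_eq (α := A) Finset.univ (· ≤ ·),
        Multiset.map_coe, Multiset.sum_coe]
    have hsum2 : ∑ a ∈ Finset.univ, (if T.perm a = c then w.count c else 0)
        = w.count c := by
      rw [Finset.sum_eq_single (T.perm.symm c)]
      · simp
      · intro b _ hb
        have hbc : ¬ (T.perm b = c) := by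
          intro h
          apply hb
          rw [← h]
          simp
        simp [hbc]
      · intro h
        exact absurd (Finset.mem_univ _) h
    rw [hsum1, hsum2]
  rw [hbwt]
  exact List.Perm.eq_of_pairwise' hsort1 hsort2 (hpermA.trans hpermB)
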